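/- Let P be a nonempty compact convex subset of ℝⁿ, f, g : ℝⁿ → ℝ convex and differentiable, F = f + g, with curvature-type constant C_F ≥ 0, i.e., F((1−α)x + αy) ≤ F(x) + α⟨∇F(x), y − x⟩ + (C_F/2)α² for all x, y ∈ P and α ∈ [0,1]. Let x⋆ ∈ P minimize F over P, set h(x) = F(x) − F(x⋆). Fix x_k ∈ P, let s_k minimize u ↦ ⟨∇f(x_k), u − x_k⟩ + g(u) − g(x_k) over P, let α ∈ [0,1], and set x_{k+1} = x_k + α(s_k − x_k). Then h(x_{k+1}) ≤ (1 − α) h(x_k) + (C_F/2)α². -/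

import Mathlib

open RealInnerProductSpace


lemma inner_gradient_eq {n : ℕ} (f : EuclideanSpace ℝ (Fin n) → ℝ)
    (x v : EuclideanSpace ℝ (Fin n)) :
    ⟪gradient f x, v⟫ = fderiv ℝ f x v :=
  InnerProductSpace.toDual_symm_apply

lemma grad_ineq {n : ℕ} (f : EuclideanSpace ℝ (Fin n) → ℝ)
    (hconv : ConvexOn ℝ Set.univ f) (hdiff : Differentiable ℝ f)
    (x y : EuclideanSpace ℝ (Fin n)) :
    f x + ⟪gradient f x, y - x⟫ ≤ f y := by
  set v := y - x with hv
  set φ : ℝ → ℝ := fun t => f (x + t • v) with hφ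
  have hconvφ : ConvexOn ℝ Set.univ φ := by
    have := hconv.comp_affineMap (AffineMap.lineMap x y : ℝ →ᵃ[ℝ] _)
    refine (by simpa using this : ConvexOn ℝ Set.univ (f ∘ ⇑(AffineMap.lineMap x y))).congr ?_
    intro t _
    show f (AffineMap.lineMap x y t) = f (x + t • v)
    rw [AffineMap.lineMap_apply, hv, vsub_eq_sub, vadd_eq_add, add_comm]
  have hder : HasDerivAt φ (fderiv ℝ f x v) 0 := by
    have hline : HasDerivAt (fun t : ℝ => x + t • v) v 0 := by
      simpa using ((hasDerivAt_id (0:ℝ)).smul_const v).const_add x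
    have hfd : HasFDerivAt f (fderiv ℝ f x) ((0:ℝ) • v + x) := by
      simpa using (hdiff x).hasFDerivAt
    have hfd' : HasFDerivAt f (fderiv ℝ f x) (x + (0:ℝ) • v) := by simpa using hfd
    have := hfd'.comp_hasDerivAt 0 hline
    exact this
  have hslope := hconvφ.le_slope_of_hasDerivAt (Set.mem_univ (0:ℝ)) (Set.mem_univ (1:ℝ))
    one_pos hder
  have : fderiv ℝ f x v ≤ φ 1 - φ 0 := by
    simpa [slope, φ] using hslope
  have h0 : φ 0 = f x := by simp [φ]
  have h1 : φ 1 = f y := by simp [φ, hv]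
  rw [inner_gradient_eq]
  linarith [this, h0.symm, h1.symm]


/-- per-iteration decrease: with curvature constant `C_F`, minimizer `x⋆` of
`F = f + g` over `P`, `h x = F x - F x⋆`, `s_k` minimizing the partially linearized map at
`x_k ∈ P`, and `x_{k+1} = x_k + α (s_k - x_k)` with `α ∈ [0,1]`:
`h x_{k+1} ≤ (1 - α) h x_k + (C_F/2) α²`. -/
theorem stmt_10 (n : ℕ) (P : Set (EuclideanSpace ℝ (Fin n)))
    (hPne : P.Nonempty) (hPcpt : IsCompact P) (hPconv : Convex ℝ P)
    (f g : EuclideanSpace ℝ (Fin n) → ℝ)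
    (hfconv : ConvexOn ℝ Set.univ f) (hgconv : ConvexOn ℝ Set.univ g)
    (hfdiff : Differentiable ℝ f) (hgdiff : Differentiable ℝ g)
    (CF : ℝ) (hCF : 0 ≤ CF)
    (hcurv : ∀ x ∈ P, ∀ y ∈ P, ∀ α ∈ Set.Icc (0 : ℝ) 1,
      f ((1 - α) • x + α • y) + g ((1 - α) • x + α • y) ≤
        f x + g x + α * ⟪gradient (fun z => f z + g z) x, y - x⟫ + CF / 2 * α ^ 2)
    (xstar : EuclideanSpace ℝ (Fin n)) (hxstar : xstar ∈ P)
    (hmin : IsMinOn (fun x => f x + g x) P xstar)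
    (xk : EuclideanSpace ℝ (Fin n)) (hxk : xk ∈ P)
    (sk : EuclideanSpace ℝ (Fin n)) (hsk : sk ∈ P)
    (hskmin : IsMinOn (fun u => ⟪gradient f xk, u - xk⟫ + g u - g xk) P sk)
    (α : ℝ) (hα : α ∈ Set.Icc (0 : ℝ) 1) :
    (f (xk + α • (sk - xk)) + g (xk + α • (sk - xk))) - (f xstar + g xstar) ≤
      (1 - α) * ((f xk + g xk) - (f xstar + g xstar)) + CF / 2 * α ^ 2 := by
  have hxk1 : xk + α • (sk - xk) = (1 - α) • xk + α • sk := by module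
  have hcurv' := hcurv xk hxk sk hsk α hα
  -- split the gradient of the sum
  have hsplit : ⟪gradient (fun z => f z + g z) xk, sk - xk⟫ =
      ⟪gradient f xk, sk - xk⟫ + ⟪gradient g xk, sk - xk⟫ := by
    rw [inner_gradient_eq, inner_gradient_eq, inner_gradient_eq]
    have : fderiv ℝ (fun z => f z + g z) xk = fderiv ℝ f xk + fderiv ℝ g xk :=
      fderiv_add (hfdiff xk) (hgdiff xk)
    rw [this]; rfl
  have hg1 : g xk + ⟪gradient g xk, sk - xk⟫ ≤ g sk := grad_ineq g hgconv hgdiff xk sk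
  have hf1 : f xk + ⟪gradient f xk, xstar - xk⟫ ≤ f xstar := grad_ineq f hfconv hfdiff xk xstar
  have hskm : ⟪gradient f xk, sk - xk⟫ + g sk - g xk ≤
      ⟪gradient f xk, xstar - xk⟫ + g xstar - g xk := hskmin hxstar
  have hkey : ⟪gradient (fun z => f z + g z) xk, sk - xk⟫ ≤
      -((f xk + g xk) - (f xstar + g xstar)) := by
    rw [hsplit]; linarith
  have hmul : α * ⟪gradient (fun z => f z + g z) xk, sk - xk⟫ ≤
      α * (-((f xk + g xk) - (f xstar + g xstar))) :=
    mul_le_mul_of_nonneg_left hkey hα.1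
  rw [hxk1]
  linarith [hcurv']
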